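/- Let X, Y ⊆ ℕ and α a real number. Suppose the fractional parts {αx}, x ∈ X, are dense in (1-β,1) ∪ (0,β) and the fractional parts {αy}, y ∈ Y, are dense in (1-γ,1) ∪ (0,γ), for some β, γ ∈ (0,1/2]. Then the fractional parts {αz}, z ∈ X + Y, are dense in (1-μ,1) ∪ (0,μ) where μ = min(β + γ, 1/2). -/

import Mathlib

theorem fract_dense_sumset (X Y : Set ℕ) (α β γ : ℝ)
    (hβ : β ∈ Set.Ioc (0 : ℝ) (1 / 2)) (hγ : γ ∈ Set.Ioc (0 : ℝ) (1 / 2))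
    (hX : ∀ u ∈ Set.Ioo (1 - β) 1 ∪ Set.Ioo 0 β, ∀ ε > (0 : ℝ),
      ∃ x ∈ X, |Int.fract (α * x) - u| < ε)
    (hY : ∀ u ∈ Set.Ioo (1 - γ) 1 ∪ Set.Ioo 0 γ, ∀ ε > (0 : ℝ),
      ∃ y ∈ Y, |Int.fract (α * y) - u| < ε) :
    ∀ u ∈ Set.Ioo (1 - min (β + γ) (1 / 2)) 1 ∪ Set.Ioo 0 (min (β + γ) (1 / 2)),
      ∀ ε > (0 : ℝ), ∃ z ∈ {n : ℕ | ∃ x ∈ X, ∃ y ∈ Y, n = x + y},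
        |Int.fract (α * z) - u| < ε := by
  obtain ⟨hβ0, hβ2⟩ := hβ
  obtain ⟨hγ0, hγ2⟩ := hγ
  intro u hu ε hε
  have key : ∀ a b : ℝ, a ∈ Set.Ioo (1-β) 1 ∪ Set.Ioo 0 β →
      b ∈ Set.Ioo (1-γ) 1 ∪ Set.Ioo 0 γ → ∀ k : ℤ,
      a + b = u + k → (k:ℝ) < a + b → a + b < k + 1 →
      ∃ z ∈ {n : ℕ | ∃ x ∈ X, ∃ y ∈ Y, n = x + y}, |Int.fract (α * z) - u| < ε := by
    intro a b ha hb k hab hk1 hk2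
    set δ := min (ε/2) (min (a+b-(k:ℝ)) ((k:ℝ)+1-(a+b)) / 2) with hδdef
    have hδ0 : 0 < δ := by
      apply lt_min (by linarith)
      have : 0 < min (a+b-(k:ℝ)) ((k:ℝ)+1-(a+b)) := lt_min (by linarith) (by linarith)
      linarith
    have hδε : δ ≤ ε/2 := min_le_left _ _
    have hδa : 2*δ ≤ a+b-(k:ℝ) := by
      have h1 := min_le_right (ε/2) (min (a+b-(k:ℝ)) ((k:ℝ)+1-(a+b)) / 2)
      have h2 := min_le_left (a+b-(k:ℝ)) ((k:ℝ)+1-(a+b))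
      simp only [← hδdef] at h1
      linarith
    have hδb : 2*δ ≤ (k:ℝ)+1-(a+b) := by
      have h1 := min_le_right (ε/2) (min (a+b-(k:ℝ)) ((k:ℝ)+1-(a+b)) / 2)
      have h2 := min_le_right (a+b-(k:ℝ)) ((k:ℝ)+1-(a+b))
      simp only [← hδdef] at h1
      linarith
    obtain ⟨x, hxX, hx⟩ := hX a ha δ hδ0
    obtain ⟨y, hyY, hy⟩ := hY b hb δ hδ0
    refine ⟨x + y, ⟨x, hxX, y, hyY, rfl⟩, ?_⟩
    set s := Int.fract (α*x) + Int.fract (α*y) with hs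
    have hsum : |s - (a+b)| < 2*δ := by
      calc |s - (a+b)| = |(Int.fract (α*x) - a) + (Int.fract (α*y) - b)| := by rw [hs]; ring_nf
        _ ≤ |Int.fract (α*x) - a| + |Int.fract (α*y) - b| := abs_add_le _ _
        _ < δ + δ := add_lt_add hx hy
        _ = 2*δ := by ring
    have habs := abs_lt.mp hsum
    have hfz : Int.fract (α * ((x+y : ℕ) : ℝ)) = s - k := by
      have h1 : α * ((x+y : ℕ) : ℝ) = s + ((⌊α*x⌋ + ⌊α*y⌋ : ℤ) : ℝ) := by
        simp only [hs, Int.fract]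
        push_cast
        ring
      rw [h1, Int.fract_add_intCast, Int.fract_eq_iff]
      exact ⟨by linarith, by linarith, k, by ring⟩
    rw [hfz, abs_lt]
    constructor <;> linarith
  rcases hu with hu | hu
  · obtain ⟨hu1, hu2⟩ := hu
    have hm1 := min_le_left (β+γ) (1/2 : ℝ)
    have hm2 := min_le_right (β+γ) (1/2 : ℝ)
    have hu0 : 0 < u := by linarith
    have huβγ : 1 - (β+γ) < u := by linarith
    set a := (max (1-β) u + min 1 (u+γ))/2 with hadef
    have hmm : max (1-β) u < min 1 (u+γ) :=
      max_lt (lt_min (by linarith) (by linarith)) (lt_min (by linarith) (by linarith))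
    have ha1 : 1 - β < a := lt_of_le_of_lt (le_max_left _ _) (by
      have := le_max_right (1-β) u; rw [hadef]; linarith)
    have ha2 : a < 1 := by
      have h1 := min_le_left 1 (u+γ)
      have h2 : a < min 1 (u+γ) := by rw [hadef]; linarith
      linarith
    have hau : u < a := lt_of_le_of_lt (le_max_right _ _) (by rw [hadef]; linarith)
    have haγ : a < u + γ := by
      have h1 := min_le_right 1 (u+γ)
      have h2 : a < min 1 (u+γ) := by rw [hadef]; linarith
      linarith
    exact key a (u + 1 - a) (Or.inl ⟨ha1, ha2⟩) (Or.inl ⟨by linarith, by linarith⟩) 1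
      (by push_cast; ring) (by push_cast; linarith) (by push_cast; linarith)
  · obtain ⟨hu1, hu2⟩ := hu
    have hm1 := min_le_left (β+γ) (1/2 : ℝ)
    have hm2 := min_le_right (β+γ) (1/2 : ℝ)
    have huβγ : u < β + γ := by linarith
    have hu12 : u < 1/2 := by linarith
    set a := (max 0 (u-γ) + min β u)/2 with hadef
    have hmm : max 0 (u-γ) < min β u :=
      max_lt (lt_min (by linarith) (by linarith)) (lt_min (by linarith) (by linarith))
    have ha0 : 0 < a := lt_of_le_of_lt (le_max_left _ _) (by
      have := le_max_right (0:ℝ) (u-γ); rw [hadef]; linarith)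
    have haβ : a < β := by
      have h1 := min_le_left β u
      have h2 : a < min β u := by rw [hadef]; linarith
      linarith
    have hau : a < u := by
      have h1 := min_le_right β u
      have h2 : a < min β u := by rw [hadef]; linarith
      linarith
    have haγ : u - γ < a := lt_of_le_of_lt (le_max_right _ _) (by rw [hadef]; linarith)
    exact key a (u - a) (Or.inr ⟨ha0, haβ⟩) (Or.inr ⟨by linarith, by linarith⟩) 0
      (by push_cast; ring) (by push_cast; linarith) (by push_cast; linarith)
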